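/- Let 1 ≤ a < b be integers with a + b odd, let m be the largest integer with m < ((a+b−1)² + 4b)/(4a) − (a+b−1)/2, and let r be a sufficiently large integer. Let G = K_m + (K_r ∪ K_{(a+b+1)/2}) be the join of K_m with the disjoint union of K_r and K_{(a+b+1)/2}. Then δ(G) = m + (a+b−1)/2 < ((a+b−1)² + 4b)/(4a), and G has no fractional h-factor, where h(u) = a for u ∈ V(K_m) and h(v) = b for all other vertices v. Consequently the minimum-degree bound ((a+b−1)² + 4b)/(4a) in the sufficient condition for all fractional [a,b]-factors is best possible. -/

import Mathlib

open Finset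

/-- The degree of `v` in the induced subgraph `G − S` (on `V(G) \ S`), i.e. the number of
neighbors of `v` in `G` that lie outside `S`. -/
def dOut {V : Type*} [Fintype V] [DecidableEq V] (G : SimpleGraph V) [DecidableRel G.Adj]
    (S : Finset V) (v : V) : ℕ :=
  (G.neighborFinset v \ S).card

/-- `Tset G f S = {v ∈ V(G) − S : d_{G−S}(v) < f v}`. -/
def Tset {V : Type*} [Fintype V] [DecidableEq V] (G : SimpleGraph V) [DecidableRel G.Adj]
    (f : V → ℕ) (S : Finset V) : Finset V :=
  Sᶜ.filter fun v => dOut G S v < f v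

/-- `h` is (the indicator function of) a fractional `(g,f)`-factor of `G`:
`0 ≤ h(e) ≤ 1` on every edge and `g x ≤ Σ_{e ∋ x} h e ≤ f x` for every vertex `x`. -/
def IsFracFactor {V : Type*} [Fintype V] [DecidableEq V] (G : SimpleGraph V)
    [DecidableRel G.Adj] (g f : V → ℕ) (h : Sym2 V → ℝ) : Prop :=
  (∀ e ∈ G.edgeFinset, 0 ≤ h e ∧ h e ≤ 1) ∧
  ∀ x : V, (g x : ℝ) ≤ ∑ e ∈ G.incidenceFinset x, h e ∧
    ∑ e ∈ G.incidenceFinset x, h e ≤ (f x : ℝ)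

/-- `G` has all fractional `(g,f)`-factors: for every `q : V → ℕ` with `g ≤ q ≤ f`
pointwise, `G` has a fractional `q`-factor (a fractional `(q,q)`-factor). -/
def HasAllFracFactors {V : Type*} [Fintype V] [DecidableEq V] (G : SimpleGraph V)
    [DecidableRel G.Adj] (g f : V → ℕ) : Prop :=
  ∀ q : V → ℕ, (∀ v, g v ≤ q v) → (∀ v, q v ≤ f v) → ∃ h, IsFracFactor G q q h

open scoped Classical

/-- The graph `K_m + (K_r ∪ K_s)`: the join of a complete graph on `m` vertices with the
disjoint union of complete graphs on `r` and `s` vertices.  Two distinct vertices are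
adjacent unless one lies in the `K_r` part and the other in the `K_s` part. -/
def joinCliques (m r s : ℕ) : SimpleGraph (Fin m ⊕ (Fin r ⊕ Fin s)) :=
  SimpleGraph.fromRel fun x y =>
    match x, y with
    | Sum.inr (Sum.inl _), Sum.inr (Sum.inr _) => False
    | Sum.inr (Sum.inr _), Sum.inr (Sum.inl _) => False
    | _, _ => True

/- ### Auxiliary lemmas -/

private lemma jc_adj_inl {m r s : ℕ} (i : Fin m) (y : Fin m ⊕ (Fin r ⊕ Fin s)) :
    (joinCliques m r s).Adj (Sum.inl i) y ↔ Sum.inl i ≠ y := by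
  simp [joinCliques]

private lemma jc_adj_rr {m r s : ℕ} (k k' : Fin s) :
    (joinCliques m r s).Adj (Sum.inr (Sum.inr k)) (Sum.inr (Sum.inr k')) ↔ k ≠ k' := by
  simp [joinCliques]

private lemma jc_adj_rl {m r s : ℕ} (k : Fin s) (j : Fin r) :
    ¬ (joinCliques m r s).Adj (Sum.inr (Sum.inr k)) (Sum.inr (Sum.inl j)) := by
  simp [joinCliques]

private lemma jc_adj_ri {m r s : ℕ} (k : Fin s) (i : Fin m) :
    (joinCliques m r s).Adj (Sum.inr (Sum.inr k)) (Sum.inl i) := by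
  simp [joinCliques]

private lemma sum_ite_ne (n : ℕ) (a : Fin n) :
    (∑ x : Fin n, if a = x then 0 else 1) = n - 1 := by
  have h : (∑ x : Fin n, if a = x then 0 else 1) = #(univ.filter fun x => a ≠ x) := by
    rw [Finset.card_filter]
    exact Finset.sum_congr rfl fun x _ => by by_cases h : a = x <;> simp [h]
  rw [h, Finset.filter_ne, Finset.card_erase_of_mem (mem_univ a), Finset.card_univ,
    Fintype.card_fin]

private lemma jc_degree_inl {m r s : ℕ} (i : Fin m) :
    (joinCliques m r s).degree (Sum.inl i) = (m - 1) + (r + s) := by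
  rw [← SimpleGraph.card_neighborFinset_eq_degree, SimpleGraph.neighborFinset_eq_filter,
    Finset.card_filter, Fintype.sum_sum_type, Fintype.sum_sum_type]
  simp [joinCliques, sum_ite_ne]

private lemma jc_degree_inrl {m r s : ℕ} (j : Fin r) :
    (joinCliques m r s).degree (Sum.inr (Sum.inl j)) = m + (r - 1) := by
  rw [← SimpleGraph.card_neighborFinset_eq_degree, SimpleGraph.neighborFinset_eq_filter,
    Finset.card_filter, Fintype.sum_sum_type, Fintype.sum_sum_type]
  simp [joinCliques, sum_ite_ne]

private lemma jc_degree_inrr {m r s : ℕ} (k : Fin s) :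
    (joinCliques m r s).degree (Sum.inr (Sum.inr k)) = m + (s - 1) := by
  rw [← SimpleGraph.card_neighborFinset_eq_degree, SimpleGraph.neighborFinset_eq_filter,
    Finset.card_filter, Fintype.sum_sum_type, Fintype.sum_sum_type]
  simp [joinCliques, sum_ite_ne]

private lemma incidenceFinset_eq_image' {V : Type*} [Fintype V] [DecidableEq V]
    (G : SimpleGraph V) [DecidableRel G.Adj] (x : V) :
    G.incidenceFinset x = (G.neighborFinset x).image (fun y => s(x, y)) := by
  ext e
  simp only [SimpleGraph.mem_incidenceFinset, Finset.mem_image, SimpleGraph.mem_neighborFinset,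
    SimpleGraph.incidenceSet, Set.mem_sep_iff]
  constructor
  · rintro ⟨he, hx⟩
    refine ⟨Sym2.Mem.other hx, ?_, Sym2.other_spec hx⟩
    rw [← SimpleGraph.mem_edgeSet, Sym2.other_spec hx]
    exact he
  · rintro ⟨y, hy, rfl⟩
    exact ⟨(SimpleGraph.mem_edgeSet G).mpr hy, Sym2.mem_mk_left x y⟩

private lemma sum_incidence' {V : Type*} [Fintype V] [DecidableEq V]
    (G : SimpleGraph V) [DecidableRel G.Adj] (h : Sym2 V → ℝ) (x : V) :
    ∑ e ∈ G.incidenceFinset x, h e = ∑ y ∈ G.neighborFinset x, h s(x, y) := by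
  rw [incidenceFinset_eq_image', Finset.sum_image]
  intro y _ z _ hyz
  exact Sym2.congr_right.mp hyz

private lemma jc_nbhd_rr {m r s : ℕ} (k : Fin s) :
    (joinCliques m r s).neighborFinset (Sum.inr (Sum.inr k)) =
      (univ.map ⟨Sum.inl, Sum.inl_injective⟩) ∪
      ((univ.map ⟨fun k' : Fin s => Sum.inr (Sum.inr k'), fun a b hab => by
          simpa using hab⟩).erase (Sum.inr (Sum.inr k))) := by
  ext y
  rw [SimpleGraph.mem_neighborFinset]
  rcases y with i | j | k'
  · simp [jc_adj_ri, jc_adj_rl, jc_adj_rr, eq_comm, Ne, not_iff_not]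
  · simp [jc_adj_ri, jc_adj_rl, jc_adj_rr, eq_comm, Ne, not_iff_not]
    exact fun x hx => by cases hx
  · simp [jc_adj_ri, jc_adj_rl, jc_adj_rr, eq_comm, Ne, not_iff_not]
    exact fun _ => ⟨k', rfl⟩

/- ### Main theorem -/

theorem min_degree_bound_sharp (a b : ℕ) (ha : 1 ≤ a) (hab : a < b) (hodd : Odd (a + b))
    (m : ℕ)
    (hm₁ : (m : ℝ) < (((a : ℝ) + b - 1) ^ 2 + 4 * b) / (4 * a) - ((a : ℝ) + b - 1) / 2)
    (hm₂ : ∀ k : ℤ,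
      (k : ℝ) < (((a : ℝ) + b - 1) ^ 2 + 4 * b) / (4 * a) - ((a : ℝ) + b - 1) / 2 →
        k ≤ (m : ℤ)) :
    ∃ r₀ : ℕ, ∀ r : ℕ, r₀ ≤ r →
      (joinCliques m r ((a + b + 1) / 2)).minDegree = m + (a + b - 1) / 2 ∧
      ((joinCliques m r ((a + b + 1) / 2)).minDegree : ℝ) <
        (((a : ℝ) + b - 1) ^ 2 + 4 * b) / (4 * a) ∧
      ¬ ∃ h' : Sym2 (Fin m ⊕ (Fin r ⊕ Fin ((a + b + 1) / 2))) → ℝ,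
          IsFracFactor (joinCliques m r ((a + b + 1) / 2))
            (Sum.elim (fun _ => a) (fun _ => b)) (Sum.elim (fun _ => a) (fun _ => b)) h' := by
  obtain ⟨t, ht⟩ := hodd
  have hn : (a + b + 1) / 2 = t + 1 := by omega
  have ht2 : (a + b - 1) / 2 = t := by omega
  -- real versions
  have habR : (a : ℝ) + b = 2 * t + 1 := by exact_mod_cast congrArg (Nat.cast : ℕ → ℝ) ht
  refine ⟨t + 1, fun r hr => ?_⟩
  set n := (a + b + 1) / 2 with hndef
  set G := joinCliques m r n with hG
  have hn1 : 1 ≤ n := by omega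
  set k0 : Fin n := ⟨0, by omega⟩ with hk0
  haveI : Nonempty (Fin m ⊕ (Fin r ⊕ Fin n)) := ⟨Sum.inr (Sum.inr k0)⟩
  -- minimum degree
  have hdeg1 : ∀ i : Fin m, G.degree (Sum.inl i) = (m - 1) + (r + n) :=
    fun i => jc_degree_inl i
  have hdeg2 : ∀ j : Fin r, G.degree (Sum.inr (Sum.inl j)) = m + (r - 1) :=
    fun j => jc_degree_inrl j
  have hdeg3 : ∀ k : Fin n, G.degree (Sum.inr (Sum.inr k)) = m + (n - 1) :=
    fun k => jc_degree_inrr k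
  have hmin : G.minDegree = m + t := by
    apply le_antisymm
    · have h1 := G.minDegree_le_degree (Sum.inr (Sum.inr k0))
      rw [hdeg3] at h1
      omega
    · apply SimpleGraph.le_minDegree_of_forall_le_degree
      intro v
      rcases v with i | j | k
      · rw [hdeg1]; omega
      · rw [hdeg2]; omega
      · rw [hdeg3]; omega
  have htR : (t : ℝ) = ((a : ℝ) + b - 1) / 2 := by linarith
  refine ⟨by rw [hmin, ht2], ?_, ?_⟩
  · rw [hmin]
    push_cast
    linarith
  -- no fractional factor
  rintro ⟨h', hbd, hsum⟩
  have hq : ∀ x, ∑ e ∈ G.incidenceFinset x, h' e =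
      ((Sum.elim (fun _ => a) (fun _ => b) x : ℕ) : ℝ) :=
    fun x => le_antisymm (hsum x).2 (hsum x).1
  have hle1 : ∀ {x y : Fin m ⊕ (Fin r ⊕ Fin n)}, G.Adj x y → h' s(x, y) ≤ 1 := by
    intro x y hadj
    exact (hbd _ (by rw [SimpleGraph.mem_edgeFinset]; exact hadj)).2
  have hge0 : ∀ {x y : Fin m ⊕ (Fin r ⊕ Fin n)}, G.Adj x y → 0 ≤ h' s(x, y) := by
    intro x y hadj
    exact (hbd _ (by rw [SimpleGraph.mem_edgeFinset]; exact hadj)).1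
  set S : Finset (Fin m ⊕ (Fin r ⊕ Fin n)) := univ.map ⟨Sum.inl, Sum.inl_injective⟩ with hS
  set W : Finset (Fin m ⊕ (Fin r ⊕ Fin n)) :=
    univ.map ⟨fun k' : Fin n => Sum.inr (Sum.inr k'), fun a b hab => by simpa using hab⟩ with hW
  have hSW : Disjoint S W := by
    rw [Finset.disjoint_left]
    rintro x hx hx'
    simp only [hS, hW, Finset.mem_map, Function.Embedding.coeFn_mk, Finset.mem_univ,
      true_and] at hx hx'
    obtain ⟨i, rfl⟩ := hx
    obtain ⟨k, hk⟩ := hx'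
    exact absurd hk (by simp)
  -- Step A: per K_n vertex
  have hA : ∀ k : Fin n,
      (b : ℝ) ≤ (∑ y ∈ S, h' s(Sum.inr (Sum.inr k), y)) + ((n : ℝ) - 1) := by
    intro k
    have h1 := hq (Sum.inr (Sum.inr k))
    rw [sum_incidence',
      show G.neighborFinset (Sum.inr (Sum.inr k)) = _ from jc_nbhd_rr k] at h1
    rw [← hS, ← hW] at h1
    rw [Finset.sum_union (hSW.mono_right (Finset.erase_subset _ _))] at h1
    simp only [Sum.elim_inr] at h1
    have h2 : ∑ y ∈ W.erase (Sum.inr (Sum.inr k)), h' s(Sum.inr (Sum.inr k), y) ≤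
        ((n : ℝ) - 1) := by
      have hcard : (W.erase (Sum.inr (Sum.inr k))).card = n - 1 := by
        rw [Finset.card_erase_of_mem (by simp [hW]; exact ⟨k, rfl⟩), Finset.card_map, Finset.card_univ,
          Fintype.card_fin]
      have h3 := Finset.sum_le_card_nsmul (W.erase (Sum.inr (Sum.inr k)))
        (fun y => h' s(Sum.inr (Sum.inr k), y)) 1 ?_
      · rw [hcard, nsmul_eq_mul, mul_one] at h3
        refine h3.trans ?_
        have : ((n - 1 : ℕ) : ℝ) = (n : ℝ) - 1 := by
          have : (1 : ℕ) ≤ n := hn1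
          push_cast [Nat.cast_sub this]
          ring
        rw [this]
      · intro y hy
        rw [Finset.mem_erase] at hy
        obtain ⟨hne, hyW⟩ := hy
        simp only [hW, Finset.mem_map, Function.Embedding.coeFn_mk, Finset.mem_univ,
          true_and] at hyW
        obtain ⟨k', rfl⟩ := hyW
        exact hle1 ((jc_adj_rr k k').mpr (by rintro rfl; exact hne rfl))
    linarith
  -- Step B: per K_m vertex
  have hB : ∀ i : Fin m,
      (∑ y ∈ W, h' s(Sum.inl i, y)) ≤ (a : ℝ) := by
    intro i
    have h1 := hq (Sum.inl i)
    rw [sum_incidence'] at h1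
    simp only [Sum.elim_inl] at h1
    rw [← h1]
    apply Finset.sum_le_sum_of_subset_of_nonneg
    · intro y hy
      simp only [hW, Finset.mem_map, Function.Embedding.coeFn_mk, Finset.mem_univ,
        true_and] at hy
      obtain ⟨k, rfl⟩ := hy
      rw [SimpleGraph.mem_neighborFinset]
      exact (jc_adj_inl i _).mpr (by simp)
    · intro y hy _
      exact hge0 ((SimpleGraph.mem_neighborFinset _ _ _).mp hy)
  -- sum up
  have hsum1 : (n : ℝ) * b ≤ (∑ k : Fin n, ∑ y ∈ S, h' s(Sum.inr (Sum.inr k), y))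
      + (n : ℝ) * ((n : ℝ) - 1) := by
    have := Finset.sum_le_sum (fun k _ => hA k) (s := (univ : Finset (Fin n)))
    simp only [Finset.sum_add_distrib, Finset.sum_const, Finset.card_univ, Fintype.card_fin,
      nsmul_eq_mul] at this
    calc (n : ℝ) * b = ∑ _k : Fin n, (b : ℝ) := by
          rw [Finset.sum_const, Finset.card_univ, Fintype.card_fin, nsmul_eq_mul]
      _ ≤ _ := by
          refine le_trans (Finset.sum_le_sum (fun k _ => hA k)) ?_
          rw [Finset.sum_add_distrib, Finset.sum_const, Finset.card_univ, Fintype.card_fin,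
            nsmul_eq_mul]
  have hswap : (∑ k : Fin n, ∑ y ∈ S, h' s(Sum.inr (Sum.inr k), y))
      = ∑ i : Fin m, ∑ y ∈ W, h' s(Sum.inl i, y) := by
    rw [hS, hW]
    simp only [Finset.sum_map, Function.Embedding.coeFn_mk]
    rw [Finset.sum_comm]
    congr 1
    ext i
    congr 1
    ext k
    rw [Sym2.eq_swap]
    rfl
  have hsum2 : (∑ i : Fin m, ∑ y ∈ W, h' s(Sum.inl i, y)) ≤ (m : ℝ) * a := by
    calc _ ≤ ∑ _i : Fin m, (a : ℝ) := Finset.sum_le_sum (fun i _ => hB i)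
      _ = (m : ℝ) * a := by
          rw [Finset.sum_const, Finset.card_univ, Fintype.card_fin, nsmul_eq_mul]
  have hmain : (n : ℝ) * b ≤ (m : ℝ) * a + (n : ℝ) * ((n : ℝ) - 1) := by
    rw [hswap] at hsum1
    linarith
  -- arithmetic contradiction
  have hnR : (n : ℝ) = ((a : ℝ) + b + 1) / 2 := by
    have : (n : ℕ) = t + 1 := hn
    rw [this]
    push_cast
    linarith
  have h4a : (0 : ℝ) < 4 * a := by
    have : (1 : ℝ) ≤ (a : ℝ) := by exact_mod_cast ha
    linarith
  have key : (m : ℝ) * (4 * a) <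
      (((a : ℝ) + b - 1) ^ 2 + 4 * b) - ((a : ℝ) + b - 1) / 2 * (4 * a) := by
    have h5 := mul_lt_mul_of_pos_right hm₁ h4a
    rw [sub_mul, div_mul_cancel₀ _ (ne_of_gt h4a)] at h5
    linarith
  rw [hnR] at hmain
  nlinarith [hmain, key, h4a]
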